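/- arXiv:0809.3925 — 3 statements merged into one kernel-verified Lean document; each statement's English description precedes it below -/
import Mathlib

section
/- Suppose g ∈ W^{1,2}(S¹; ℝ²) is continuous, z := g·g' has an absolutely continuous representative bounded in modulus by C on S¹, and there is a sequence θ_j → θ₀ with |g'(θ_j)| → ∞ and (J g(θ_j))·g'(θ_j) → 0. Then g(θ₀) = 0. -/
open Filter

/-- Euclidean dot product on ℝ². -/
def dot (a b : ℝ × ℝ) : ℝ := a.1 * b.1 + a.2 * b.2

/-- Counterclockwise rotation by π/2 in ℝ². -/
def Jv (a : ℝ × ℝ) : ℝ × ℝ := (-a.2, a.1)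

lemma norm_sq_le (p : ℝ × ℝ) : ‖p‖ ^ 2 ≤ p.1 ^ 2 + p.2 ^ 2 := by
  have : ‖p‖ = max ‖p.1‖ ‖p.2‖ := rfl
  rw [this]
  rcases max_cases ‖p.1‖ ‖p.2‖ with ⟨h, _⟩ | ⟨h, _⟩ <;> rw [h] <;>
    simp only [Real.norm_eq_abs, sq_abs] <;> nlinarith [sq_nonneg p.1, sq_nonneg p.2]

/-- If `g` is continuous, `g·g'` is bounded by `C`, and along a sequence
`θ_j → θ₀` one has `|g'(θ_j)| → ∞` and `(J g(θ_j))·g'(θ_j) → 0`, then `g(θ₀) = 0`. -/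
theorem stmt_6 (g g' : ℝ → ℝ × ℝ) (hg : Continuous g) (C : ℝ) (hC : 0 < C)
    (hbound : ∀ t : ℝ, |dot (g t) (g' t)| ≤ C)
    (θ : ℕ → ℝ) (θ₀ : ℝ)
    (h1 : Tendsto θ atTop (nhds θ₀))
    (h2 : Tendsto (fun j => ‖g' (θ j)‖) atTop atTop)
    (h3 : Tendsto (fun j => dot (Jv (g (θ j))) (g' (θ j))) atTop (nhds 0)) :
    g θ₀ = 0 := by
  set f : ℕ → ℝ := fun j => (g (θ j)).1 ^ 2 + (g (θ j)).2 ^ 2 with hf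
  -- key pointwise inequality
  have key : ∀ t : ℝ, ((g t).1 ^ 2 + (g t).2 ^ 2) * ‖g' t‖ ^ 2 ≤
      (dot (g t) (g' t)) ^ 2 + (dot (Jv (g t)) (g' t)) ^ 2 := by
    intro t
    have h := norm_sq_le (g' t)
    have hnn : (0:ℝ) ≤ (g t).1 ^ 2 + (g t).2 ^ 2 := by positivity
    have hid : (dot (g t) (g' t)) ^ 2 + (dot (Jv (g t)) (g' t)) ^ 2 =
        ((g t).1 ^ 2 + (g t).2 ^ 2) * ((g' t).1 ^ 2 + (g' t).2 ^ 2) := by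
      simp only [dot, Jv]; ring
    nlinarith [mul_le_mul_of_nonneg_left h hnn]
  -- the bound function tends to 0
  have hNsq : Tendsto (fun j => ‖g' (θ j)‖ ^ 2) atTop atTop :=
    (tendsto_pow_atTop two_ne_zero).comp h2
  have hnum : Tendsto (fun j => C ^ 2 + (dot (Jv (g (θ j))) (g' (θ j))) ^ 2) atTop
      (nhds (C ^ 2)) := by
    have h3' : Tendsto (fun j => (dot (Jv (g (θ j))) (g' (θ j))) ^ 2) atTop (nhds 0) := by
      simpa using h3.pow 2
    simpa using (tendsto_const_nhds (x := C ^ 2) (f := atTop (α := ℕ))).add h3'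
  have hbd : Tendsto (fun j => (C ^ 2 + (dot (Jv (g (θ j))) (g' (θ j))) ^ 2) /
      ‖g' (θ j)‖ ^ 2) atTop (nhds 0) := hnum.div_atTop hNsq
  -- squeeze
  have hf0 : Tendsto f atTop (nhds 0) := by
    refine tendsto_of_tendsto_of_tendsto_of_le_of_le' tendsto_const_nhds hbd ?_ ?_
    · filter_upwards with j; positivity
    · filter_upwards [h2.eventually_ge_atTop 1] with j hj
      have hpos : (0:ℝ) < ‖g' (θ j)‖ ^ 2 := by nlinarith
      rw [le_div_iff₀ hpos]
      simp only [hf]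
      have hk := key (θ j)
      have hD : (dot (g (θ j)) (g' (θ j))) ^ 2 ≤ C ^ 2 := by
        have := hbound (θ j)
        nlinarith [abs_nonneg (dot (g (θ j)) (g' (θ j))), sq_abs (dot (g (θ j)) (g' (θ j)))]
      nlinarith
  -- continuity limit
  have hfc : Tendsto f atTop (nhds ((g θ₀).1 ^ 2 + (g θ₀).2 ^ 2)) := by
    have : Continuous fun t => (g t).1 ^ 2 + (g t).2 ^ 2 := by fun_prop
    exact (this.tendsto θ₀).comp h1
  have hzero : (g θ₀).1 ^ 2 + (g θ₀).2 ^ 2 = 0 := tendsto_nhds_unique hfc hf0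
  have h1' : (g θ₀).1 = 0 := by nlinarith [sq_nonneg (g θ₀).1, sq_nonneg (g θ₀).2]
  have h2' : (g θ₀).2 = 0 := by nlinarith [sq_nonneg (g θ₀).1, sq_nonneg (g θ₀).2]
  exact Prod.ext h1' h2'
end

section
/- Let z: S¹ → ℝ satisfy z = ½|g'|² + f(d) a.e. where f is strictly increasing on (0,∞) with f(t) → −∞ as t → 0+, d > 0 a.e., and suppose z is continuous (equal a.e. to c + ½|g|² for a constant c and continuous g). If ess inf d > 0 fails on an interval ω, then ess sup_{ω} |g'| = ∞; conversely, if ess inf_{ω} d > 0 then ess sup_{ω} |g'| < ∞. -/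
open Filter MeasureTheory

lemma norm_le_of_dot (v : ℝ × ℝ) : ‖v‖ ^ 2 ≤ dot v v := by
  rw [Prod.norm_def]
  simp only [Real.norm_eq_abs, dot]
  rcases le_total |v.1| |v.2| with h | h
  · rw [max_eq_right h]; nlinarith [sq_abs v.2, sq_nonneg v.1]
  · rw [max_eq_left h]; nlinarith [sq_abs v.1, sq_nonneg v.2]

lemma dot_le_norm (v : ℝ × ℝ) : dot v v ≤ 2 * ‖v‖ ^ 2 := by
  rw [Prod.norm_def]
  simp only [Real.norm_eq_abs, dot]
  rcases le_total |v.1| |v.2| with h | h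
  · rw [max_eq_right h]
    nlinarith [sq_abs v.2, sq_abs v.1, mul_self_le_mul_self (abs_nonneg v.1) h,
      abs_mul_abs_self v.1, abs_mul_abs_self v.2]
  · rw [max_eq_left h]
    nlinarith [sq_abs v.1, sq_abs v.2, mul_self_le_mul_self (abs_nonneg v.2) h,
      abs_mul_abs_self v.1, abs_mul_abs_self v.2]

lemma dot_nonneg (v : ℝ × ℝ) : 0 ≤ dot v v := by
  simp only [dot]; nlinarith [sq_nonneg v.1, sq_nonneg v.2]

/-- Under the DuBois-Reymond relation `f(d) + ½|g'|² − ½|g|² = c` a.e. on an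
interval `ω`, with `f` strictly increasing and `f → −∞` at `0+` and `d > 0` a.e.,
the essential infimum of `d` on `ω` is positive iff `|g'|` is essentially bounded on `ω`. -/
theorem stmt_7 (a b c : ℝ) (hab : a < b)
    (f : ℝ → ℝ) (hfmono : StrictMonoOn f (Set.Ioi 0))
    (hfbot : Tendsto f (nhdsWithin 0 (Set.Ioi 0)) atBot)
    (g g' : ℝ → ℝ × ℝ) (hg : Continuous g)
    (hdpos : ∀ᵐ θ ∂(volume.restrict (Set.Ioo a b)), 0 < dot (Jv (g θ)) (g' θ))
    (heq : ∀ᵐ θ ∂(volume.restrict (Set.Ioo a b)),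
      f (dot (Jv (g θ)) (g' θ)) + (1/2) * dot (g' θ) (g' θ)
        - (1/2) * dot (g θ) (g θ) = c) :
    (∃ D > (0:ℝ), ∀ᵐ θ ∂(volume.restrict (Set.Ioo a b)), D ≤ dot (Jv (g θ)) (g' θ)) ↔
    (∃ K : ℝ, ∀ᵐ θ ∂(volume.restrict (Set.Ioo a b)), ‖g' θ‖ ≤ K) := by
  have hcont : ContinuousOn (fun θ => dot (g θ) (g θ)) (Set.Icc a b) := by
    apply Continuous.continuousOn
    unfold dot
    fun_prop
  obtain ⟨θ0, hθ0, hM⟩ := isCompact_Icc.exists_isMaxOn (Set.nonempty_Icc.2 hab.le) hcont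
  set M := dot (g θ0) (g θ0) with hMdef
  constructor
  · rintro ⟨D, hD, hDae⟩
    refine ⟨Real.sqrt (2 * (c + (1/2) * M - f D)), ?_⟩
    filter_upwards [hdpos, heq, hDae, ae_restrict_mem measurableSet_Ioo] with θ h1 h2 h3 hθ
    have hθI : θ ∈ Set.Icc a b := Set.mem_Icc_of_Ioo hθ
    have hgM : dot (g θ) (g θ) ≤ M := hM hθI
    have hfD : f D ≤ f (dot (Jv (g θ)) (g' θ)) :=
      hfmono.monotoneOn hD (Set.mem_Ioi.2 h1) h3
    have hd' : dot (g' θ) (g' θ) ≤ 2 * (c + (1/2) * M - f D) := by linarith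
    have := norm_le_of_dot (g' θ)
    rw [show Real.sqrt (2 * (c + (1/2) * M - f D))
        = Real.sqrt (2 * (c + (1/2) * M - f D)) from rfl]
    have hnn : (0:ℝ) ≤ ‖g' θ‖ := norm_nonneg _
    rw [Real.le_sqrt hnn]
    · linarith
    · linarith [dot_nonneg (g' θ)]
  · rintro ⟨K, hK⟩
    set K' := max K 0 with hK'def
    have hbd : ∀ᶠ t in nhdsWithin 0 (Set.Ioi 0), f t < c - K' ^ 2 :=
      hfbot.eventually (eventually_lt_atBot (c - K' ^ 2))
    obtain ⟨u, hu, husub⟩ := mem_nhdsGT_iff_exists_Ioo_subset.1 hbd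
    have hu0 : (0:ℝ) < u := hu
    refine ⟨u / 2, by linarith, ?_⟩
    filter_upwards [hdpos, heq, hK] with θ h1 h2 h3
    by_contra hlt
    push_neg at hlt
    have hmem : dot (Jv (g θ)) (g' θ) ∈ Set.Ioo (0:ℝ) u := ⟨h1, by linarith⟩
    have hflt : f (dot (Jv (g θ)) (g' θ)) < c - K' ^ 2 := husub hmem
    have hgg : 0 ≤ dot (g θ) (g θ) := dot_nonneg _
    have h4 : ‖g' θ‖ ≤ K' := le_trans h3 (le_max_left _ _)
    have h5 : dot (g' θ) (g' θ) ≤ 2 * K' ^ 2 := by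
      have := dot_le_norm (g' θ)
      nlinarith [norm_nonneg (g' θ)]
    linarith
end

section
/- Let r, γ be C² on (0,ε₀) with r > 0, j := γ' > 0, d := r² j, and suppose g = r e_R(γ) satisfies the Euler–Lagrange equation g − h'(d) J g' − (g' + h'(d) J g)' = 0 with h(t) = t^{−s}, s > 0. Then the quantity d + r² h'(d) = d − s r² d^{−(s+1)} is constant on (0,ε₀); equivalently there exists τ ∈ ℝ with s r² = τ d^{s+1} + d^{s+2} on (0,ε₀). -/
private lemma const_on_Ioo {a b : ℝ} {f : ℝ → ℝ}
    (h : ∀ x ∈ Set.Ioo a b, HasDerivAt f 0 x) {x y : ℝ}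
    (hx : x ∈ Set.Ioo a b) (hy : y ∈ Set.Ioo a b) : f x = f y := by
  apply (convex_Ioo a b).is_const_of_fderivWithin_eq_zero
    (fun z hz => ((h z hz).differentiableAt).differentiableWithinAt)
    (fun z hz => ?_) hx hy
  rw [fderivWithin_of_isOpen isOpen_Ioo hz, (h z hz).hasFDerivAt.fderiv]
  ext
  simp

/-- If `g = r e_R(γ)` solves the Euler–Lagrange equation
`g − h'(d) J g' − (g' + h'(d) J g)' = 0` with `h(t) = t^{−s}`, `d = r² j`,
then `d + r² h'(d)` is constant; equivalently there is `τ ∈ ℝ` with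
`s r² = τ d^{s+1} + d^{s+2}`. -/
theorem stmt_11 (s ε₀ : ℝ) (hs : 0 < s) (hε : 0 < ε₀)
    (r γ j : ℝ → ℝ) (Dg DG : ℝ → ℝ × ℝ)
    (hr : ∀ θ ∈ Set.Ioo (0:ℝ) ε₀, 0 < r θ)
    (hj : ∀ θ ∈ Set.Ioo (0:ℝ) ε₀, 0 < j θ)
    (hγ : ∀ θ ∈ Set.Ioo (0:ℝ) ε₀, HasDerivAt γ (j θ) θ)
    (hDg : ∀ θ ∈ Set.Ioo (0:ℝ) ε₀,
      HasDerivAt (fun t => (r t * Real.cos (γ t), r t * Real.sin (γ t))) (Dg θ) θ)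
    (hDG : ∀ θ ∈ Set.Ioo (0:ℝ) ε₀,
      HasDerivAt (fun t => Dg t +
          (-s * ((r t) ^ 2 * j t) ^ (-(s + 1))) •
            Jv (r t * Real.cos (γ t), r t * Real.sin (γ t)))
        (DG θ) θ)
    (hEL : ∀ θ ∈ Set.Ioo (0:ℝ) ε₀,
      (r θ * Real.cos (γ θ), r θ * Real.sin (γ θ)) -
          (-s * ((r θ) ^ 2 * j θ) ^ (-(s + 1))) • Jv (Dg θ) - DG θ = 0) :
    ∃ τ : ℝ, ∀ θ ∈ Set.Ioo (0:ℝ) ε₀,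
      s * (r θ) ^ 2 = τ * ((r θ) ^ 2 * j θ) ^ (s + 1) + ((r θ) ^ 2 * j θ) ^ (s + 2) := by
  set G : ℝ → ℝ × ℝ := fun t => Dg t +
      (-s * ((r t) ^ 2 * j t) ^ (-(s + 1))) •
        Jv (r t * Real.cos (γ t), r t * Real.sin (γ t)) with hGdef
  set g : ℝ → ℝ × ℝ := fun t => (r t * Real.cos (γ t), r t * Real.sin (γ t)) with hgdef
  set Q : ℝ → ℝ := fun t => -(G t).1 * (g t).2 + (G t).2 * (g t).1 with hQdef
  -- derivative of Q is zero
  have hQ0 : ∀ θ ∈ Set.Ioo (0:ℝ) ε₀, HasDerivAt Q 0 θ := by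
    intro θ hθ
    have hG := hDG θ hθ
    have hgd : HasDerivAt g (Dg θ) θ := hDg θ hθ
    have hG1 : HasDerivAt (fun t => (G t).1) (DG θ).1 θ := by
      simpa using (hG.hasFDerivAt.fst).hasDerivAt
    have hG2 : HasDerivAt (fun t => (G t).2) (DG θ).2 θ := by
      simpa using (hG.hasFDerivAt.snd).hasDerivAt
    have hg1 : HasDerivAt (fun t => (g t).1) (Dg θ).1 θ := by
      simpa using (hgd.hasFDerivAt.fst).hasDerivAt
    have hg2 : HasDerivAt (fun t => (g t).2) (Dg θ).2 θ := by
      simpa using (hgd.hasFDerivAt.snd).hasDerivAt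
    have hQ : HasDerivAt Q
        ((-(DG θ).1 * (g θ).2 + -(G θ).1 * (Dg θ).2) +
          ((DG θ).2 * (g θ).1 + (G θ).2 * (Dg θ).1)) θ :=
      (hG1.neg.mul hg2).add (hG2.mul hg1)
    have hel := hEL θ hθ
    have hel1 : (g θ).1 - (-s * ((r θ) ^ 2 * j θ) ^ (-(s + 1))) * -(Dg θ).2
        - (DG θ).1 = 0 := congrArg Prod.fst hel
    have hel2 : (g θ).2 - (-s * ((r θ) ^ 2 * j θ) ^ (-(s + 1))) * (Dg θ).1
        - (DG θ).2 = 0 := congrArg Prod.snd hel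
    have hGc1 : (G θ).1 = (Dg θ).1 + (-s * ((r θ) ^ 2 * j θ) ^ (-(s + 1))) * -(g θ).2 := rfl
    have hGc2 : (G θ).2 = (Dg θ).2 + (-s * ((r θ) ^ 2 * j θ) ^ (-(s + 1))) * (g θ).1 := rfl
    convert hQ using 1
    rw [hGc1, hGc2]
    linear_combination (-(g θ).2) * hel1 + (g θ).1 * hel2
  -- identity Dg · Jg = r² j
  have hd_id : ∀ θ ∈ Set.Ioo (0:ℝ) ε₀,
      -(Dg θ).1 * (r θ * Real.sin (γ θ)) + (Dg θ).2 * (r θ * Real.cos (γ θ))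
        = (r θ) ^ 2 * j θ := by
    intro θ hθ
    have hgd : HasDerivAt g (Dg θ) θ := hDg θ hθ
    have hg1 : HasDerivAt (fun t => (g t).1) (Dg θ).1 θ := by
      simpa using (hgd.hasFDerivAt.fst).hasDerivAt
    have hg2 : HasDerivAt (fun t => (g t).2) (Dg θ).2 θ := by
      simpa using (hgd.hasFDerivAt.snd).hasDerivAt
    have hγc : HasDerivAt (fun t => Real.cos (γ t)) (-Real.sin (γ θ) * j θ) θ :=
      (hγ θ hθ).cos
    have hγs : HasDerivAt (fun t => Real.sin (γ t)) (Real.cos (γ θ) * j θ) θ :=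
      (hγ θ hθ).sin
    have hφ : HasDerivAt (fun t => (g t).2 * Real.cos (γ t) - (g t).1 * Real.sin (γ t))
        (((Dg θ).2 * Real.cos (γ θ) + (g θ).2 * (-Real.sin (γ θ) * j θ)) -
          ((Dg θ).1 * Real.sin (γ θ) + (g θ).1 * (Real.cos (γ θ) * j θ))) θ :=
      (hg2.mul hγc).sub (hg1.mul hγs)
    have hzero : (fun t => (g t).2 * Real.cos (γ t) - (g t).1 * Real.sin (γ t)) =
        fun _ => (0:ℝ) := by
      funext t; simp [hgdef]; ring
    have hval : ((Dg θ).2 * Real.cos (γ θ) + (g θ).2 * (-Real.sin (γ θ) * j θ)) -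
        ((Dg θ).1 * Real.sin (γ θ) + (g θ).1 * (Real.cos (γ θ) * j θ)) = 0 := by
      rw [hzero] at hφ
      exact hφ.unique (hasDerivAt_const θ 0)
    have hg1e : (g θ).1 = r θ * Real.cos (γ θ) := rfl
    have hg2e : (g θ).2 = r θ * Real.sin (γ θ) := rfl
    rw [hg1e, hg2e] at hval
    have hsc := Real.sin_sq_add_cos_sq (γ θ)
    linear_combination r θ * hval + r θ ^ 2 * j θ * hsc
  -- Q equals d + a r²
  have hQval : ∀ θ ∈ Set.Ioo (0:ℝ) ε₀,
      Q θ = (r θ) ^ 2 * j θ +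
        (-s * ((r θ) ^ 2 * j θ) ^ (-(s + 1))) * (r θ) ^ 2 := by
    intro θ hθ
    have hGc1 : (G θ).1 = (Dg θ).1 + (-s * ((r θ) ^ 2 * j θ) ^ (-(s + 1))) * -(g θ).2 := rfl
    have hGc2 : (G θ).2 = (Dg θ).2 + (-s * ((r θ) ^ 2 * j θ) ^ (-(s + 1))) * (g θ).1 := rfl
    have hg1e : (g θ).1 = r θ * Real.cos (γ θ) := rfl
    have hg2e : (g θ).2 = r θ * Real.sin (γ θ) := rfl
    have hid := hd_id θ hθ
    have hsc := Real.sin_sq_add_cos_sq (γ θ)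
    show -(G θ).1 * (g θ).2 + (G θ).2 * (g θ).1 = _
    rw [hGc1, hGc2, hg1e, hg2e]
    linear_combination hid + (-s * ((r θ) ^ 2 * j θ) ^ (-(s + 1))) * (r θ)^2 * hsc
  -- constancy
  have hmid : ε₀ / 2 ∈ Set.Ioo (0:ℝ) ε₀ := ⟨by linarith, by linarith⟩
  set c : ℝ := Q (ε₀ / 2) with hc
  refine ⟨-c, fun θ hθ => ?_⟩
  have hQc : Q θ = c := const_on_Ioo hQ0 hθ hmid
  have hrθ := hr θ hθ
  have hjθ := hj θ hθ
  have hd : 0 < (r θ) ^ 2 * j θ := by positivity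
  have hQeq : (r θ) ^ 2 * j θ +
      (-s * ((r θ) ^ 2 * j θ) ^ (-(s + 1))) * (r θ) ^ 2 = c := by
    rw [← hQval θ hθ]; exact hQc
  set d : ℝ := (r θ) ^ 2 * j θ with hdd
  have h1 : d ^ (-(s+1)) * d ^ (s+1) = 1 := by
    rw [← Real.rpow_add hd, show -(s+1) + (s+1) = 0 by ring, Real.rpow_zero]
  have h2 : d ^ (s+2) = d * d ^ (s+1) := by
    rw [show (s:ℝ) + 2 = 1 + (s+1) by ring, Real.rpow_add hd, Real.rpow_one]
  linear_combination (-(d ^ (s+1))) * hQeq + (-(s * (r θ) ^ 2)) * h1 - h2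
end
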